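/- For every real x < −1, the boundary values of d₁ and d₂ exist and satisfy d_{1,+}(x) = d_{2,−}(x) and d_{1,−}(x) = d_{2,+}(x); and for every real x with −1 < x < 0, they satisfy d_{1,+}(x) = d_{2,−}(x)·e^{−2βπi} and d_{1,−}(x) = d_{2,+}(x)·e^{−2βπi}. -/

import Mathlib

open Complex Filter Topology Set

/-- `β = ln(1-γ)/(2πi)`. -/
noncomputable def beta (γ : ℝ) : ℂ := Complex.log (1 - γ) / (2 * Real.pi * Complex.I)

/-- `λ(ζ) = ((ζ-i)/(ζ+i))^β`, principal branch. -/
noncomputable def lam (γ : ℝ) (ζ : ℂ) : ℂ := ((ζ - Complex.I) / (ζ + Complex.I)) ^ (beta γ)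

/-- `d₁(z) = λ(z^{1/2})`, principal branch of the square root. -/
noncomputable def d1 (γ : ℝ) (z : ℂ) : ℂ := lam γ (z ^ ((1 : ℂ)/2))

/-- `d₂(z) = λ(-z^{1/2})`, principal branch of the square root. -/
noncomputable def d2 (γ : ℝ) (z : ℂ) : ℂ := lam γ (-(z ^ ((1 : ℂ)/2)))

lemma gap_aux_ne_plus (x ε : ℝ) (hε : 0 < ε) : ((x:ℂ) + ε * I) ≠ 0 := by
  intro h
  have := congrArg Complex.im h
  simp at this
  linarith

lemma gap_aux_ne_minus (x ε : ℝ) (hε : 0 < ε) : ((x:ℂ) - ε * I) ≠ 0 := by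
  intro h
  have := congrArg Complex.im h
  simp at this
  linarith

/-- The principal square root of a point off the real axis has positive real part. -/
lemma gap_aux_sqrt_re_pos (z : ℂ) (hz : z.im ≠ 0) : 0 < (z ^ ((1:ℂ)/2)).re := by
  have hz0 : z ≠ 0 := fun h => hz (by rw [h]; simp)
  rw [Complex.cpow_def_of_ne_zero hz0, Complex.exp_re]
  have him : (Complex.log z * ((1:ℂ)/2)).im = Complex.arg z / 2 := by
    simp [Complex.mul_im, Complex.log_im]
    ring
  rw [him]
  have h1 : Complex.arg z < Real.pi := by
    rcases lt_or_eq_of_le (Complex.arg_le_pi z) with h | h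
    · exact h
    · exact absurd (Complex.arg_eq_pi_iff.mp h).2 hz
  have h2 : -Real.pi < Complex.arg z := Complex.neg_pi_lt_arg z
  have hcos : 0 < Real.cos (Complex.arg z / 2) := by
    apply Real.cos_pos_of_mem_Ioo
    constructor <;> [linarith; linarith]
  positivity

/-- `(x+εi)^{1/2} → i√(-x)` as `ε → 0⁺`, for `x < 0`. -/
lemma gap_aux_sqrt_tendsto_plus (x : ℝ) (hx : x < 0) :
    Tendsto (fun ε : ℝ => ((x:ℂ) + ε * I) ^ ((1:ℂ)/2)) (𝓝[>] (0:ℝ))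
      (𝓝 (I * Real.sqrt (-x))) := by
  have hpos : (0:ℝ) < -x := by linarith
  have hlim : Complex.exp ((↑(Real.log (-x)) + ↑Real.pi * I) * (1/2)) = I * Real.sqrt (-x) := by
    have hs : Real.sqrt (-x) = Real.exp (Real.log (-x) * (1/2)) := by
      rw [Real.sqrt_eq_rpow, Real.rpow_def_of_pos hpos]
    have : ((↑(Real.log (-x)) + ↑Real.pi * I) * (1/2) : ℂ)
        = ↑(Real.log (-x) * (1/2)) + ↑(Real.pi/2) * I := by push_cast; ring
    rw [this, Complex.exp_add, Complex.exp_mul_I, ← Complex.ofReal_cos, ← Complex.ofReal_sin,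
      Real.cos_pi_div_two, Real.sin_pi_div_two, ← Complex.ofReal_exp, ← hs]
    push_cast; ring
  have hz : Tendsto (fun ε : ℝ => (x:ℂ) + ε * I) (𝓝[>] (0:ℝ))
      (𝓝[{z : ℂ | 0 ≤ z.im}] (x:ℂ)) := by
    rw [tendsto_nhdsWithin_iff]
    constructor
    · have : Tendsto (fun ε : ℝ => (x:ℂ) + ε * I) (𝓝 (0:ℝ)) (𝓝 ((x:ℂ) + 0 * I)) := by
        apply Tendsto.add tendsto_const_nhds
        exact (Complex.continuous_ofReal.tendsto 0).mul tendsto_const_nhds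
      simpa using this.mono_left nhdsWithin_le_nhds
    · filter_upwards [self_mem_nhdsWithin] with ε (hε : 0 < ε)
      simp [le_of_lt hε]
  have hlog : Tendsto (fun ε : ℝ => Complex.log ((x:ℂ) + ε * I)) (𝓝[>] (0:ℝ))
      (𝓝 (↑(Real.log (-x)) + ↑Real.pi * I)) := by
    have := (Complex.tendsto_log_nhdsWithin_im_nonneg_of_re_neg_of_im_zero
      (z := (x:ℂ)) (by simpa using hx) (by simp)).comp hz
    have habs : ‖(x:ℂ)‖ = -x := by
      rw [Complex.norm_real, Real.norm_eq_abs, abs_of_neg hx]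
    rwa [habs] at this
  have : Tendsto (fun ε : ℝ => Complex.exp (Complex.log ((x:ℂ) + ε * I) * (1/2)))
      (𝓝[>] (0:ℝ)) (𝓝 (Complex.exp ((↑(Real.log (-x)) + ↑Real.pi * I) * (1/2)))) :=
    (Complex.continuous_exp.tendsto _).comp (hlog.mul_const _)
  rw [hlim] at this
  apply this.congr'
  filter_upwards [self_mem_nhdsWithin] with ε (hε : 0 < ε)
  rw [Complex.cpow_def_of_ne_zero (gap_aux_ne_plus x ε hε)]

/-- `(x-εi)^{1/2} → -i√(-x)` as `ε → 0⁺`, for `x < 0`. -/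
lemma gap_aux_sqrt_tendsto_minus (x : ℝ) (hx : x < 0) :
    Tendsto (fun ε : ℝ => ((x:ℂ) - ε * I) ^ ((1:ℂ)/2)) (𝓝[>] (0:ℝ))
      (𝓝 (-(I * Real.sqrt (-x)))) := by
  have hpos : (0:ℝ) < -x := by linarith
  have hlim : Complex.exp ((↑(Real.log (-x)) - ↑Real.pi * I) * (1/2))
      = -(I * Real.sqrt (-x)) := by
    have hs : Real.sqrt (-x) = Real.exp (Real.log (-x) * (1/2)) := by
      rw [Real.sqrt_eq_rpow, Real.rpow_def_of_pos hpos]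
    have : ((↑(Real.log (-x)) - ↑Real.pi * I) * (1/2) : ℂ)
        = ↑(Real.log (-x) * (1/2)) + ↑(-(Real.pi/2)) * I := by push_cast; ring
    rw [this, Complex.exp_add, Complex.exp_mul_I, ← Complex.ofReal_cos, ← Complex.ofReal_sin,
      Real.cos_neg, Real.sin_neg, Real.cos_pi_div_two, Real.sin_pi_div_two,
      ← Complex.ofReal_exp, ← hs]
    push_cast; ring
  have hz : Tendsto (fun ε : ℝ => (x:ℂ) - ε * I) (𝓝[>] (0:ℝ))
      (𝓝[{z : ℂ | z.im < 0}] (x:ℂ)) := by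
    rw [tendsto_nhdsWithin_iff]
    constructor
    · have : Tendsto (fun ε : ℝ => (x:ℂ) - ε * I) (𝓝 (0:ℝ)) (𝓝 ((x:ℂ) - 0 * I)) := by
        apply Tendsto.sub tendsto_const_nhds
        exact (Complex.continuous_ofReal.tendsto 0).mul tendsto_const_nhds
      simpa using this.mono_left nhdsWithin_le_nhds
    · filter_upwards [self_mem_nhdsWithin] with ε (hε : 0 < ε)
      simp [hε]
  have hlog : Tendsto (fun ε : ℝ => Complex.log ((x:ℂ) - ε * I)) (𝓝[>] (0:ℝ))
      (𝓝 (↑(Real.log (-x)) - ↑Real.pi * I)) := by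
    have := (Complex.tendsto_log_nhdsWithin_im_neg_of_re_neg_of_im_zero
      (z := (x:ℂ)) (by simpa using hx) (by simp)).comp hz
    have habs : ‖(x:ℂ)‖ = -x := by
      rw [Complex.norm_real, Real.norm_eq_abs, abs_of_neg hx]
    rwa [habs] at this
  have : Tendsto (fun ε : ℝ => Complex.exp (Complex.log ((x:ℂ) - ε * I) * (1/2)))
      (𝓝[>] (0:ℝ)) (𝓝 (Complex.exp ((↑(Real.log (-x)) - ↑Real.pi * I) * (1/2)))) :=
    (Complex.continuous_exp.tendsto _).comp (hlog.mul_const _)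
  rw [hlim] at this
  apply this.congr'
  filter_upwards [self_mem_nhdsWithin] with ε (hε : 0 < ε)
  rw [Complex.cpow_def_of_ne_zero (gap_aux_ne_minus x ε hε)]

/-- Sign of the imaginary part of `(ζ-i)/(ζ+i)` when `Re ζ > 0`. -/
lemma gap_aux_moebius_im_neg (ζ : ℂ) (h : 0 < ζ.re) : ((ζ - I) / (ζ + I)).im < 0 := by
  have hden : ζ + I ≠ 0 := by
    intro h0
    have := congrArg Complex.re h0
    simp at this
    linarith
  rw [Complex.div_im, div_sub_div_same]
  have hsq : 0 < Complex.normSq (ζ + I) := Complex.normSq_pos.mpr hden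
  apply div_neg_of_neg_of_pos _ hsq
  simp only [Complex.sub_im, Complex.add_im, Complex.sub_re, Complex.add_re,
    Complex.I_re, Complex.I_im]
  nlinarith

/-- Sign of the imaginary part of `(ζ-i)/(ζ+i)` when `Re ζ < 0`. -/
lemma gap_aux_moebius_im_pos (ζ : ℂ) (h : ζ.re < 0) : 0 < ((ζ - I) / (ζ + I)).im := by
  have hden : ζ + I ≠ 0 := by
    intro h0
    have := congrArg Complex.re h0
    simp at this
    linarith
  rw [Complex.div_im, div_sub_div_same]
  have hsq : 0 < Complex.normSq (ζ + I) := Complex.normSq_pos.mpr hden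
  apply div_pos _ hsq
  simp only [Complex.sub_im, Complex.add_im, Complex.sub_re, Complex.add_re,
    Complex.I_re, Complex.I_im]
  nlinarith

/-- Continuity case: limit of `lam γ ∘ f` when the Möbius image of the limit is in the
slit plane. -/
lemma gap_aux_lam_tendsto_pos (γ : ℝ) (f : ℝ → ℂ) (ζ₀ : ℂ)
    (hf : Tendsto f (𝓝[>] (0:ℝ)) (𝓝 ζ₀)) (hden : ζ₀ + I ≠ 0)
    (hw : 0 < ((ζ₀ - I) / (ζ₀ + I)).re) :
    Tendsto (fun ε : ℝ => lam γ (f ε)) (𝓝[>] (0:ℝ))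
      (𝓝 (((ζ₀ - I) / (ζ₀ + I)) ^ beta γ)) := by
  have hg : Tendsto (fun ε : ℝ => (f ε - I) / (f ε + I)) (𝓝[>] (0:ℝ))
      (𝓝 ((ζ₀ - I) / (ζ₀ + I))) :=
    (hf.sub_const I).div (hf.add_const I) hden
  exact (continuousAt_cpow_const ((Complex.mem_slitPlane_iff.mpr (Or.inl hw)))).tendsto.comp hg

/-- Branch-cut case, approach from below. -/
lemma gap_aux_lam_tendsto_neg_side (γ : ℝ) (f : ℝ → ℂ) (ζ₀ : ℂ)
    (hf : Tendsto f (𝓝[>] (0:ℝ)) (𝓝 ζ₀)) (hden : ζ₀ + I ≠ 0)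
    (hw : ((ζ₀ - I) / (ζ₀ + I)).re < 0) (hwim : ((ζ₀ - I) / (ζ₀ + I)).im = 0)
    (hside : ∀ᶠ ε in 𝓝[>] (0:ℝ), ((f ε - I) / (f ε + I)).im < 0) :
    Tendsto (fun ε : ℝ => lam γ (f ε)) (𝓝[>] (0:ℝ))
      (𝓝 (Complex.exp ((↑(Real.log ‖(ζ₀ - I) / (ζ₀ + I)‖) - ↑Real.pi * I)
        * beta γ))) := by
  have hg : Tendsto (fun ε : ℝ => (f ε - I) / (f ε + I)) (𝓝[>] (0:ℝ))
      (𝓝[{z : ℂ | z.im < 0}] ((ζ₀ - I) / (ζ₀ + I))) := by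
    rw [tendsto_nhdsWithin_iff]
    exact ⟨(hf.sub_const I).div (hf.add_const I) hden, hside⟩
  have hlog := (Complex.tendsto_log_nhdsWithin_im_neg_of_re_neg_of_im_zero hw hwim).comp hg
  have := (Complex.continuous_exp.tendsto _).comp (hlog.mul_const (beta γ))
  apply this.congr'
  filter_upwards [hside] with ε hε
  have hne : (f ε - I) / (f ε + I) ≠ 0 := by
    intro h0; rw [h0] at hε; simp at hε
  simp only [Function.comp, lam]
  rw [Complex.cpow_def_of_ne_zero hne]

/-- Branch-cut case, approach from above. -/
lemma gap_aux_lam_tendsto_pos_side (γ : ℝ) (f : ℝ → ℂ) (ζ₀ : ℂ)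
    (hf : Tendsto f (𝓝[>] (0:ℝ)) (𝓝 ζ₀)) (hden : ζ₀ + I ≠ 0)
    (hw : ((ζ₀ - I) / (ζ₀ + I)).re < 0) (hwim : ((ζ₀ - I) / (ζ₀ + I)).im = 0)
    (hside : ∀ᶠ ε in 𝓝[>] (0:ℝ), 0 < ((f ε - I) / (f ε + I)).im) :
    Tendsto (fun ε : ℝ => lam γ (f ε)) (𝓝[>] (0:ℝ))
      (𝓝 (Complex.exp ((↑(Real.log ‖(ζ₀ - I) / (ζ₀ + I)‖) + ↑Real.pi * I)
        * beta γ))) := by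
  have hg : Tendsto (fun ε : ℝ => (f ε - I) / (f ε + I)) (𝓝[>] (0:ℝ))
      (𝓝[{z : ℂ | 0 ≤ z.im}] ((ζ₀ - I) / (ζ₀ + I))) := by
    rw [tendsto_nhdsWithin_iff]
    exact ⟨(hf.sub_const I).div (hf.add_const I) hden, hside.mono fun ε h => le_of_lt h⟩
  have hlog := (Complex.tendsto_log_nhdsWithin_im_nonneg_of_re_neg_of_im_zero hw hwim).comp hg
  have := (Complex.continuous_exp.tendsto _).comp (hlog.mul_const (beta γ))
  apply this.congr'
  filter_upwards [hside] with ε hε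
  have hne : (f ε - I) / (f ε + I) ≠ 0 := by
    intro h0; rw [h0] at hε; simp at hε
  simp only [Function.comp, lam]
  rw [Complex.cpow_def_of_ne_zero hne]

/-- For `x < -1`: `d_{1,+}(x) = d_{2,-}(x)` and `d_{1,-}(x) = d_{2,+}(x)`;
for `-1 < x < 0`: `d_{1,+}(x) = d_{2,-}(x) e^{-2βπi}` and `d_{1,-}(x) = d_{2,+}(x) e^{-2βπi}`. -/
theorem gap_tacnode_d1_d2_boundary_values (γ : ℝ) (hγ : γ ∈ Set.Ioo (0:ℝ) 1) :
    (∀ x : ℝ, x < -1 →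
      ((∃ L : ℂ,
          Tendsto (fun ε : ℝ => d1 γ ((x:ℂ) + ε * Complex.I)) (𝓝[>] (0:ℝ)) (𝓝 L) ∧
          Tendsto (fun ε : ℝ => d2 γ ((x:ℂ) - ε * Complex.I)) (𝓝[>] (0:ℝ)) (𝓝 L)) ∧
       (∃ L : ℂ,
          Tendsto (fun ε : ℝ => d1 γ ((x:ℂ) - ε * Complex.I)) (𝓝[>] (0:ℝ)) (𝓝 L) ∧
          Tendsto (fun ε : ℝ => d2 γ ((x:ℂ) + ε * Complex.I)) (𝓝[>] (0:ℝ)) (𝓝 L)))) ∧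
    (∀ x : ℝ, -1 < x → x < 0 →
      ((∃ L : ℂ,
          Tendsto (fun ε : ℝ => d1 γ ((x:ℂ) + ε * Complex.I)) (𝓝[>] (0:ℝ))
            (𝓝 (L * Complex.exp (-2 * beta γ * Real.pi * Complex.I))) ∧
          Tendsto (fun ε : ℝ => d2 γ ((x:ℂ) - ε * Complex.I)) (𝓝[>] (0:ℝ)) (𝓝 L)) ∧
       (∃ L : ℂ,
          Tendsto (fun ε : ℝ => d1 γ ((x:ℂ) - ε * Complex.I)) (𝓝[>] (0:ℝ))
            (𝓝 (L * Complex.exp (-2 * beta γ * Real.pi * Complex.I))) ∧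
          Tendsto (fun ε : ℝ => d2 γ ((x:ℂ) + ε * Complex.I)) (𝓝[>] (0:ℝ)) (𝓝 L)))) := by
  constructor
  · -- Case x < -1
    intro x hx
    have hx0 : x < 0 := by linarith
    set t : ℝ := Real.sqrt (-x) with ht
    have ht1 : 1 < t := by
      rw [ht]
      rw [show (1:ℝ) = Real.sqrt 1 by simp]
      exact Real.sqrt_lt_sqrt (by norm_num) (by linarith)
    have ht0 : 0 < t := by linarith
    -- denominators
    have hden1 : I * (t:ℂ) + I ≠ 0 := by
      intro h0
      have := congrArg Complex.im h0
      simp at this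
      linarith
    have hden2 : -(I * (t:ℂ)) + I ≠ 0 := by
      intro h0
      have := congrArg Complex.im h0
      simp at this
      linarith
    -- Möbius values
    have hw1 : (I * (t:ℂ) - I) / (I * (t:ℂ) + I) = (((t-1)/(t+1) : ℝ) : ℂ) := by
      have h2 : ((t:ℝ)+1) ≠ 0 := by positivity
      rw [Complex.ofReal_div, div_eq_div_iff hden1 (Complex.ofReal_ne_zero.mpr h2)]
      push_cast
      ring
    have hw2 : (-(I * (t:ℂ)) - I) / (-(I * (t:ℂ)) + I) = (((t+1)/(t-1) : ℝ) : ℂ) := by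
      have h2 : ((t:ℝ)-1) ≠ 0 := by intro h; rw [sub_eq_zero] at h; exact (ne_of_lt ht1).elim (by simp [h])
      rw [Complex.ofReal_div, div_eq_div_iff hden2 (Complex.ofReal_ne_zero.mpr h2)]
      push_cast
      ring
    have hT1p := gap_aux_sqrt_tendsto_plus x hx0
    have hT1m := gap_aux_sqrt_tendsto_minus x hx0
    have hT2m : Tendsto (fun ε : ℝ => -(((x:ℂ) - ε * I) ^ ((1:ℂ)/2))) (𝓝[>] (0:ℝ))
        (𝓝 (I * (t:ℂ))) := by simpa using hT1m.neg
    have hT2p : Tendsto (fun ε : ℝ => -(((x:ℂ) + ε * I) ^ ((1:ℂ)/2))) (𝓝[>] (0:ℝ))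
        (𝓝 (-(I * (t:ℂ)))) := hT1p.neg
    constructor
    · -- pair 1
      refine ⟨((I * (t:ℂ) - I) / (I * (t:ℂ) + I)) ^ beta γ, ?_, ?_⟩
      · simp only [d1]
        apply gap_aux_lam_tendsto_pos γ _ (I * (t:ℂ)) hT1p hden1
        rw [hw1]
        simp only [Complex.ofReal_re]
        apply div_pos <;> linarith
      · simp only [d2]
        apply gap_aux_lam_tendsto_pos γ _ (I * (t:ℂ)) hT2m hden1
        rw [hw1]
        simp only [Complex.ofReal_re]
        apply div_pos <;> linarith
    · -- pair 2
      refine ⟨((-(I * (t:ℂ)) - I) / (-(I * (t:ℂ)) + I)) ^ beta γ, ?_, ?_⟩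
      · simp only [d1]
        apply gap_aux_lam_tendsto_pos γ _ (-(I * (t:ℂ))) hT1m hden2
        rw [hw2]
        simp only [Complex.ofReal_re]
        apply div_pos <;> linarith
      · simp only [d2]
        apply gap_aux_lam_tendsto_pos γ _ (-(I * (t:ℂ))) hT2p hden2
        rw [hw2]
        simp only [Complex.ofReal_re]
        apply div_pos <;> linarith
  · -- Case -1 < x < 0
    intro x hxm1 hx0
    set t : ℝ := Real.sqrt (-x) with ht
    have ht1 : t < 1 := by
      rw [ht]
      rw [show (1:ℝ) = Real.sqrt 1 by simp]
      exact Real.sqrt_lt_sqrt (by linarith) (by linarith)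
    have ht0 : 0 < t := Real.sqrt_pos.mpr (by linarith)
    have hden1 : I * (t:ℂ) + I ≠ 0 := by
      intro h0
      have := congrArg Complex.im h0
      simp at this
      linarith
    have hden2 : -(I * (t:ℂ)) + I ≠ 0 := by
      intro h0
      have := congrArg Complex.im h0
      simp at this
      linarith
    have hw1 : (I * (t:ℂ) - I) / (I * (t:ℂ) + I) = (((t-1)/(t+1) : ℝ) : ℂ) := by
      have h2 : ((t:ℝ)+1) ≠ 0 := by positivity
      rw [Complex.ofReal_div, div_eq_div_iff hden1 (Complex.ofReal_ne_zero.mpr h2)]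
      push_cast
      ring
    have hw2 : (-(I * (t:ℂ)) - I) / (-(I * (t:ℂ)) + I) = (((t+1)/(t-1) : ℝ) : ℂ) := by
      have h2 : ((t:ℝ)-1) ≠ 0 := by intro h; rw [sub_eq_zero] at h; exact (ne_of_lt ht1).elim (by simp [h])
      rw [Complex.ofReal_div, div_eq_div_iff hden2 (Complex.ofReal_ne_zero.mpr h2)]
      push_cast
      ring
    have hT1p := gap_aux_sqrt_tendsto_plus x hx0
    have hT1m := gap_aux_sqrt_tendsto_minus x hx0
    have hT2m : Tendsto (fun ε : ℝ => -(((x:ℂ) - ε * I) ^ ((1:ℂ)/2))) (𝓝[>] (0:ℝ))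
        (𝓝 (I * (t:ℂ))) := by simpa using hT1m.neg
    have hT2p : Tendsto (fun ε : ℝ => -(((x:ℂ) + ε * I) ^ ((1:ℂ)/2))) (𝓝[>] (0:ℝ))
        (𝓝 (-(I * (t:ℂ)))) := hT1p.neg
    -- eventual side conditions
    have hside1p : ∀ᶠ ε : ℝ in 𝓝[>] (0:ℝ),
        ((((x:ℂ) + (ε:ℂ) * I) ^ ((1:ℂ)/2) - I) / (((x:ℂ) + ε * I) ^ ((1:ℂ)/2) + I)).im < 0 := by
      filter_upwards [self_mem_nhdsWithin] with ε (hε : 0 < ε)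
      exact gap_aux_moebius_im_neg _ (gap_aux_sqrt_re_pos _ (by simp; linarith))
    have hside1m : ∀ᶠ ε : ℝ in 𝓝[>] (0:ℝ),
        ((((x:ℂ) - (ε:ℂ) * I) ^ ((1:ℂ)/2) - I) / (((x:ℂ) - ε * I) ^ ((1:ℂ)/2) + I)).im < 0 := by
      filter_upwards [self_mem_nhdsWithin] with ε (hε : 0 < ε)
      exact gap_aux_moebius_im_neg _ (gap_aux_sqrt_re_pos _ (by simp; linarith))
    have hside2m : ∀ᶠ ε : ℝ in 𝓝[>] (0:ℝ),
        0 < ((-(((x:ℂ) - (ε:ℂ) * I) ^ ((1:ℂ)/2)) - I) /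
          (-(((x:ℂ) - ε * I) ^ ((1:ℂ)/2)) + I)).im := by
      filter_upwards [self_mem_nhdsWithin] with ε (hε : 0 < ε)
      apply gap_aux_moebius_im_pos
      simp only [Complex.neg_re]
      have := gap_aux_sqrt_re_pos ((x:ℂ) - ε * I) (by simp; linarith)
      linarith
    have hside2p : ∀ᶠ ε : ℝ in 𝓝[>] (0:ℝ),
        0 < ((-(((x:ℂ) + (ε:ℂ) * I) ^ ((1:ℂ)/2)) - I) /
          (-(((x:ℂ) + ε * I) ^ ((1:ℂ)/2)) + I)).im := by
      filter_upwards [self_mem_nhdsWithin] with ε (hε : 0 < ε)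
      apply gap_aux_moebius_im_pos
      simp only [Complex.neg_re]
      have := gap_aux_sqrt_re_pos ((x:ℂ) + ε * I) (by simp; linarith)
      linarith
    have hwre1 : ((I * (t:ℂ) - I) / (I * (t:ℂ) + I)).re < 0 := by
      rw [hw1]; simp only [Complex.ofReal_re]
      apply div_neg_of_neg_of_pos <;> linarith
    have hwim1 : ((I * (t:ℂ) - I) / (I * (t:ℂ) + I)).im = 0 := by
      rw [hw1]; exact Complex.ofReal_im _
    have hwre2 : ((-(I * (t:ℂ)) - I) / (-(I * (t:ℂ)) + I)).re < 0 := by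
      rw [hw2]; simp only [Complex.ofReal_re]
      apply div_neg_of_pos_of_neg <;> linarith
    have hwim2 : ((-(I * (t:ℂ)) - I) / (-(I * (t:ℂ)) + I)).im = 0 := by
      rw [hw2]; exact Complex.ofReal_im _
    constructor
    · -- pair 1
      set r := ‖(I * (t:ℂ) - I) / (I * (t:ℂ) + I)‖ with hr
      refine ⟨Complex.exp ((↑(Real.log r) + ↑Real.pi * I) * beta γ), ?_, ?_⟩
      · have h := gap_aux_lam_tendsto_neg_side γ _ (I * (t:ℂ)) hT1p hden1 hwre1 hwim1 hside1p
        have heq : Complex.exp ((↑(Real.log r) - ↑Real.pi * I) * beta γ)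
            = Complex.exp ((↑(Real.log r) + ↑Real.pi * I) * beta γ)
              * Complex.exp (-2 * beta γ * Real.pi * I) := by
          rw [← Complex.exp_add]
          congr 1
          ring
        rw [← hr, heq] at h
        exact h
      · have h := gap_aux_lam_tendsto_pos_side γ _ (I * (t:ℂ)) hT2m hden1 hwre1 hwim1 hside2m
        rw [← hr] at h
        exact h
    · -- pair 2
      set r := ‖(-(I * (t:ℂ)) - I) / (-(I * (t:ℂ)) + I)‖ with hr
      refine ⟨Complex.exp ((↑(Real.log r) + ↑Real.pi * I) * beta γ), ?_, ?_⟩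
      · have h := gap_aux_lam_tendsto_neg_side γ _ (-(I * (t:ℂ))) hT1m hden2 hwre2 hwim2 hside1m
        have heq : Complex.exp ((↑(Real.log r) - ↑Real.pi * I) * beta γ)
            = Complex.exp ((↑(Real.log r) + ↑Real.pi * I) * beta γ)
              * Complex.exp (-2 * beta γ * Real.pi * I) := by
          rw [← Complex.exp_add]
          congr 1
          ring
        rw [← hr, heq] at h
        exact h
      · have h := gap_aux_lam_tendsto_pos_side γ _ (-(I * (t:ℂ))) hT2p hden2 hwre2 hwim2 hside2p
        rw [← hr] at h
        exact h
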